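/- The maximal Chermak-Delgado measure of ZM(m,n,r) is m²n²/d², where d = ord_m(r). -/

import Mathlib

open Subgroup

lemma ordBound {u m : ℕ} (r n : ℕ) (hu : u ∣ m) (hm : 0 < m) (hn : 0 < n)
    (hr : ((r : ZMod m)) ^ n = 1) :
    orderOf ((r : ZMod m)) * u ≤ orderOf ((r : ZMod u)) * m := by
  classical
  have hu0 : 0 < u := Nat.pos_of_dvd_of_pos hu hm
  haveI : NeZero m := ⟨hm.ne'⟩
  haveI : NeZero u := ⟨hu0.ne'⟩
  set ψ := ZMod.castHom hu (ZMod u) with hψ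
  have hru : ((r : ZMod u)) ^ n = 1 := by
    have := congrArg ψ hr
    simpa using this
  set t := orderOf ((r : ZMod u)) with hT
  have ht : 0 < t := by
    rw [hT, orderOf_pos_iff, isOfFinOrder_iff_pow_eq_one]
    exact ⟨n, hn, hru⟩
  have hIsU : IsUnit ((r : ZMod m)) := by
    refine IsUnit.of_mul_eq_one ((r : ZMod m) ^ (n - 1)) ?_
    rw [← pow_succ']
    rw [Nat.sub_add_cancel hn]
    exact hr
  obtain ⟨ru, hru'⟩ := hIsU
  have hdr : orderOf ((r : ZMod m)) = orderOf ru := by rw [← hru', orderOf_units]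
  set su := ru ^ t with hsu
  -- orderOf su ≤ m / u
  have hψsu : ∀ i : ℕ, ψ ((su ^ i : (ZMod m)ˣ) : ZMod m) = 1 := by
    intro i
    have : ((su ^ i : (ZMod m)ˣ) : ZMod m) = (r : ZMod m) ^ (t * i) := by
      rw [hsu, ← pow_mul, Units.val_pow_eq_pow_val, hru']
    rw [this]
    have : ψ ((r : ZMod m)) = (r : ZMod u) := by simp [hψ]
    rw [map_pow, this, pow_mul, pow_orderOf_eq_one, one_pow]
  have hcards : orderOf su ≤ m / u := by
    set S : Finset (ZMod m) := Finset.univ.filter (fun x => ψ x = 1) with hS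
    have hTS : ((Finset.range (orderOf su)).image
        (fun i => ((su ^ i : (ZMod m)ˣ) : ZMod m))).card = orderOf su := by
      rw [Finset.card_image_of_injOn, Finset.card_range]
      intro i hi j hj hij
      simp only [Finset.coe_range, Set.mem_Iio] at hi hj
      have : su ^ i = su ^ j := Units.ext hij
      exact pow_injOn_Iio_orderOf hi hj this
    have hsub : ((Finset.range (orderOf su)).image
        (fun i => ((su ^ i : (ZMod m)ˣ) : ZMod m))) ⊆ S := by
      intro x hx
      simp only [Finset.mem_image] at hx
      obtain ⟨i, _, rfl⟩ := hx
      simp only [hS, Finset.mem_filter]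
      exact ⟨Finset.mem_univ _, hψsu i⟩
    have hScard : S.card ≤ m / u := by
      have h := Finset.card_le_card_of_injOn (s := S) (t := Finset.range (m / u))
        (fun x => ZMod.val x / u) ?_ ?_
      · simpa using h
      · intro x hx
        simp only [Finset.mem_range]
        exact Finset.mem_coe.mpr (Finset.mem_range.mpr (Nat.div_lt_div_of_lt_of_dvd hu (ZMod.val_lt x)))
      · intro x hx y hy hxy
        simp only [hS, Finset.coe_filter, Set.mem_setOf_eq] at hx hy
        have hxy' : ZMod.val x / u = ZMod.val y / u := hxy
        have hx1 : (ZMod.val x : ZMod u) = ((1 : ℕ) : ZMod u) := by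
          have h := hx.2
          rw [hψ, ZMod.castHom_apply, ← ZMod.natCast_val] at h
          simpa using h
        have hy1 : (ZMod.val y : ZMod u) = ((1 : ℕ) : ZMod u) := by
          have h := hy.2
          rw [hψ, ZMod.castHom_apply, ← ZMod.natCast_val] at h
          simpa using h
        have hxm : ZMod.val x % u = 1 % u := (ZMod.natCast_eq_natCast_iff _ _ _).mp hx1
        have hym : ZMod.val y % u = 1 % u := (ZMod.natCast_eq_natCast_iff _ _ _).mp hy1
        have hval : ZMod.val x = ZMod.val y := by
          have h1 := Nat.div_add_mod (ZMod.val x) u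
          have h2 := Nat.div_add_mod (ZMod.val y) u
          rw [hxy'] at h1
          omega
        have : ((ZMod.val x : ℕ) : ZMod m) = ((ZMod.val y : ℕ) : ZMod m) := by rw [hval]
        simpa [ZMod.natCast_val, ZMod.cast_id] using this
    calc orderOf su = _ := hTS.symm
      _ ≤ S.card := Finset.card_le_card hsub
      _ ≤ m / u := hScard
  -- conclude
  have hord : orderOf su = orderOf ru / Nat.gcd (orderOf ru) t := orderOf_pow ru
  have hg1 : Nat.gcd (orderOf ru) t ∣ orderOf ru := Nat.gcd_dvd_left _ _
  have hg2 : Nat.gcd (orderOf ru) t ≤ t := Nat.le_of_dvd ht (Nat.gcd_dvd_right _ _)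
  have hd' : orderOf ru ≤ orderOf su * t := by
    rw [hord]
    calc orderOf ru = orderOf ru / Nat.gcd (orderOf ru) t * Nat.gcd (orderOf ru) t :=
          (Nat.div_mul_cancel hg1).symm
      _ ≤ orderOf ru / Nat.gcd (orderOf ru) t * t := by
          exact Nat.mul_le_mul_left _ hg2
  calc orderOf ((r : ZMod m)) * u = orderOf ru * u := by rw [hdr]
    _ ≤ orderOf su * t * u := Nat.mul_le_mul_right _ hd'
    _ ≤ m / u * t * u := by
        exact Nat.mul_le_mul_right _ (Nat.mul_le_mul_right _ hcards)
    _ = t * (m / u * u) := by ring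
    _ = t * m := by rw [Nat.div_mul_cancel hu]

lemma zpow_nat_reduce {H : Type*} [Group H] (x : H) (z : ℤ) (hx : 0 < orderOf x) :
    ∃ j : ℕ, x ^ z = x ^ j := by
  refine ⟨(z % (orderOf x : ℤ)).toNat, ?_⟩
  have hnn : 0 ≤ z % (orderOf x : ℤ) :=
    Int.emod_nonneg z (by exact_mod_cast hx.ne')
  rw [← zpow_natCast, Int.toNat_of_nonneg hnn, zpow_mod_orderOf]

/-- `ordMod m r` is the multiplicative order of `r` modulo `m`. -/
noncomputable def ordMod (m r : ℕ) : ℕ := orderOf (r : ZMod m)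

/-- The Chermak–Delgado measure of a subgroup: `|H| * |C_G(H)|`. -/
noncomputable def chermakDelgadoMeasure {G : Type*} [Group G] (H : Subgroup G) : ℕ :=
  Nat.card H * Nat.card (Subgroup.centralizer (H : Set G))

/-- The maximal Chermak–Delgado measure of `ZM(m,n,r)` is `m²n²/d²`, `d = ord_m(r)`. -/
theorem stmt_10 {G : Type*} [Group G] [Finite G]
    (m n r : ℕ) (hm : 0 < m) (hn : 0 < n)
    (hgcd1 : Nat.gcd m n = 1) (hgcd2 : Nat.gcd m (r - 1) = 1)
    (hrn : r ^ n % m = 1 % m)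
    (a b : G) (ha : orderOf a = m) (hb : orderOf b = n)
    (hrel : b⁻¹ * a * b = a ^ r)
    (hgen : Subgroup.closure {a, b} = ⊤)
    (hcard : Nat.card G = m * n) :
    IsGreatest {k | ∃ H : Subgroup G, chermakDelgadoMeasure H = k}
      (m ^ 2 * n ^ 2 / ordMod m r ^ 2) := by
  classical
  set d := ordMod m r with hd
  set A := Subgroup.zpowers a with hA
  have hd_eq : d = orderOf ((r : ZMod m)) := rfl
  have hrm : ((r : ZMod m)) ^ n = 1 := by
    have h1 : (r ^ n : ℕ) ≡ 1 [MOD m] := hrn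
    have h2 := (ZMod.natCast_eq_natCast_iff _ _ _).mpr h1
    push_cast at h2
    exact h2
  have hdvdn : d ∣ n := by rw [hd_eq]; exact orderOf_dvd_of_pow_eq_one hrm
  have hdpos : 0 < d := by
    rw [hd_eq, orderOf_pos_iff, isOfFinOrder_iff_pow_eq_one]
    exact ⟨n, hn, hrm⟩
  have hcastpow : ∀ u : ℕ, u ∣ m → ((r : ZMod u)) ^ n = 1 := by
    intro u hu
    have h := congrArg (ZMod.castHom hu (ZMod u)) hrm
    rw [map_pow, map_natCast, map_one] at h
    exact h
  have ham : a ^ m = 1 := by rw [← ha]; exact pow_orderOf_eq_one a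
  have hbn : b ^ n = 1 := by rw [← hb]; exact pow_orderOf_eq_one b
  -- swap lemmas
  have hswap1 : ∀ k : ℕ, a ^ k * b = b * a ^ (k * r) := by
    intro k
    have h1 : b⁻¹ * a ^ k * b = a ^ (k * r) := by
      have : (b⁻¹ * a * b) ^ k = b⁻¹ * a ^ k * b := by
        have := conj_pow (i := k) (a := b⁻¹) (b := a)
        simpa [mul_assoc] using this
      rw [hrel] at this
      rw [← this, ← pow_mul, Nat.mul_comm]
    calc a ^ k * b = b * (b⁻¹ * a ^ k * b) := by group
      _ = b * a ^ (k * r) := by rw [h1]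
  have hswap : ∀ j k : ℕ, a ^ k * b ^ j = b ^ j * a ^ (k * r ^ j) := by
    intro j
    induction j with
    | zero => simp
    | succ j ih =>
      intro k
      calc a ^ k * b ^ (j + 1) = (a ^ k * b ^ j) * b := by rw [pow_succ, mul_assoc]
        _ = b ^ j * (a ^ (k * r ^ j) * b) := by rw [ih k, mul_assoc]
        _ = b ^ j * (b * a ^ (k * r ^ j * r)) := by rw [hswap1]
        _ = b ^ (j + 1) * a ^ (k * r ^ (j + 1)) := by
            rw [pow_succ, mul_assoc, pow_succ, mul_assoc]
  -- elements of A are natural powers of a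
  have hAmem : ∀ x ∈ A, ∃ k : ℕ, x = a ^ k := by
    intro x hx
    obtain ⟨z, hz⟩ := Subgroup.mem_zpowers_iff.mp hx
    obtain ⟨k, hk⟩ := zpow_nat_reduce a z (ha ▸ hm)
    exact ⟨k, by rw [← hz, hk]⟩
  have hconj1 : ∀ k : ℕ, b⁻¹ * a ^ k * b = a ^ (k * r) := by
    intro k
    rw [mul_assoc, hswap1]; group
  have hrpow : ∀ k : ℕ, a ^ (k * r ^ n) = a ^ k := by
    intro k
    rw [pow_eq_pow_iff_modEq, ha]
    calc k * r ^ n ≡ k * 1 [MOD m] := Nat.ModEq.mul_left k hrn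
      _ = k := Nat.mul_one k
  have hconj2 : ∀ k : ℕ, b * a ^ k * b⁻¹ = a ^ (k * r ^ (n - 1)) := by
    intro k
    have h1 : a ^ (k * r ^ (n - 1)) * b = b * a ^ k := by
      rw [hswap1, Nat.mul_assoc, ← pow_succ, Nat.sub_add_cancel hn, hrpow]
    rw [← h1]; group
  have hnormal : A.Normal := by
    have hle : Subgroup.closure {a, b} ≤ Subgroup.normalizer (A : Set G) := by
      rw [Subgroup.closure_le]
      intro x hx
      simp only [Set.mem_insert_iff, Set.mem_singleton_iff] at hx
      rcases hx with h | h
      · rw [h]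
        exact Subgroup.le_normalizer (Subgroup.mem_zpowers a)
      · rw [h]
        rw [SetLike.mem_coe, Subgroup.mem_normalizer_iff]
        intro h
        constructor
        · intro hh
          obtain ⟨k, rfl⟩ := hAmem h hh
          rw [hconj2]
          exact Subgroup.pow_mem _ (Subgroup.mem_zpowers a) _
        · intro hh
          obtain ⟨k, hk⟩ := hAmem _ hh
          have hh2 : h = b⁻¹ * (b * h * b⁻¹) * b := by group
          rw [hh2, hk, hconj1]
          exact Subgroup.pow_mem _ (Subgroup.mem_zpowers a) _
    rw [hgen] at hle
    exact Subgroup.normalizer_eq_top_iff.mp (top_le_iff.mp hle)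
  haveI := hnormal
  set π := QuotientGroup.mk' A with hπ
  have cardA : Nat.card A = m := by rw [hA, Nat.card_zpowers, ha]
  have cardQ : Nat.card (G ⧸ A) = n := by
    have h1 := Subgroup.card_eq_card_quotient_mul_card_subgroup A
    rw [hcard, cardA] at h1
    have := Nat.eq_of_mul_eq_mul_right hm (by linarith [h1] : Nat.card (G ⧸ A) * m = n * m)
    exact this
  have hπb_pow : ∀ k : ℕ, (π b) ^ k = 1 → n ∣ k := by
    intro k hk
    have hbk : b ^ k ∈ A := by
      rw [← QuotientGroup.ker_mk' A, MonoidHom.mem_ker]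
      rw [← hπ, map_pow]
      exact hk
    have h1 : orderOf (b ^ k) ∣ m := cardA ▸ Subgroup.orderOf_dvd_natCard A hbk
    have h2 : orderOf (b ^ k) ∣ n := hb ▸ orderOf_pow_dvd k
    have h3 : orderOf (b ^ k) ∣ 1 := hgcd1 ▸ Nat.dvd_gcd h1 h2
    have h4 : b ^ k = 1 := orderOf_eq_one_iff.mp (Nat.dvd_one.mp h3)
    exact hb ▸ orderOf_dvd_iff_pow_eq_one.mpr h4
  have hπbn : (π b) ^ n = 1 := by rw [← map_pow, hbn, map_one]
  have hob : orderOf (π b) = n :=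
    Nat.dvd_antisymm (orderOf_dvd_of_pow_eq_one hπbn) (hπb_pow _ (pow_orderOf_eq_one _))
  have htop : Subgroup.zpowers (π b) = ⊤ := by
    apply Subgroup.eq_top_of_card_eq
    rw [Nat.card_zpowers, hob, cardQ]
  have hπa : π a = 1 := by
    rw [hπ, QuotientGroup.mk'_apply, QuotientGroup.eq_one_iff]
    exact Subgroup.mem_zpowers a
  have coords : ∀ g : G, ∃ k j : ℕ, g = a ^ k * b ^ j := by
    intro g
    have h1 : π g ∈ Subgroup.zpowers (π b) := by rw [htop]; trivial
    obtain ⟨z, hz⟩ := Subgroup.mem_zpowers_iff.mp h1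
    obtain ⟨j, hj⟩ := zpow_nat_reduce (π b) z (hob ▸ hn)
    have h2 : π (g * (b ^ j)⁻¹) = 1 := by
      rw [map_mul, map_inv, map_pow, ← hj, hz, mul_inv_cancel]
    have h3 : g * (b ^ j)⁻¹ ∈ A := by
      rw [← QuotientGroup.ker_mk' A, MonoidHom.mem_ker]; exact h2
    obtain ⟨k, hk⟩ := hAmem _ h3
    exact ⟨k, j, by rw [← mul_inv_eq_iff_eq_mul.mp hk]⟩
  have hcore : ∀ (z : G) (i j : ℕ), z ∈ A → z * (a ^ i * b ^ j) = (a ^ i * b ^ j) * z →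
      ((r : ZMod (orderOf z))) ^ j = 1 := by
    intro z i j hzA hcomm
    obtain ⟨k, rfl⟩ := hAmem z hzA
    have h1 : a ^ k * b ^ j = b ^ j * a ^ k := by
      have e1 : a ^ i * (a ^ k * b ^ j) = a ^ i * (b ^ j * a ^ k) := by
        calc a ^ i * (a ^ k * b ^ j) = a ^ k * (a ^ i * b ^ j) := by
              rw [← mul_assoc, ← mul_assoc, ← pow_add, ← pow_add, Nat.add_comm]
          _ = (a ^ i * b ^ j) * a ^ k := hcomm
          _ = a ^ i * (b ^ j * a ^ k) := by rw [mul_assoc]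
      exact mul_left_cancel e1
    rw [hswap j k] at h1
    have h2 : a ^ (k * r ^ j) = a ^ k := mul_left_cancel h1
    have h3 : (a ^ k) ^ (r ^ j) = (a ^ k) ^ 1 := by
      rw [pow_one, ← pow_mul]; exact h2
    have h4 : r ^ j ≡ 1 [MOD orderOf (a ^ k)] := pow_eq_pow_iff_modEq.mp h3
    have h5 := (ZMod.natCast_eq_natCast_iff _ _ _).mpr h4
    push_cast at h5
    exact h5
  have hsplit : ∀ K : Subgroup G, Nat.card K = Nat.card (K.map π) * Nat.card ↥(K ⊓ A) := by
    intro K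
    set f := π.comp K.subtype with hf
    have h1 : Nat.card K = Nat.card (↥K ⧸ f.ker) * Nat.card f.ker :=
      Subgroup.card_eq_card_quotient_mul_card_subgroup f.ker
    have h2 : Nat.card (↥K ⧸ f.ker) = Nat.card f.range :=
      Nat.card_congr (QuotientGroup.quotientKerEquivRange f).toEquiv
    have h3 : f.range = K.map π := by
      rw [hf, MonoidHom.range_comp, Subgroup.range_subtype]
    have h4 : f.ker = (K ⊓ A).subgroupOf K := by
      rw [hf, ← MonoidHom.comap_ker]
      rw [hπ, QuotientGroup.ker_mk']
      ext x
      simp [Subgroup.mem_subgroupOf, Subgroup.mem_comap, x.2]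
    have h5 : Nat.card ((K ⊓ A).subgroupOf K) = Nat.card ↥(K ⊓ A) :=
      Nat.card_congr (Subgroup.subgroupOfEquivOfLe inf_le_left).toEquiv
    rw [h1, h2, h3, h4, h5]
  haveI hAc : IsCyclic ↥A := by
    refine ⟨⟨⟨a, Subgroup.mem_zpowers a⟩, ?_⟩⟩
    rintro ⟨x, hx⟩
    obtain ⟨z, hz⟩ := Subgroup.mem_zpowers_iff.mp hx
    refine Subgroup.mem_zpowers_iff.mpr ⟨z, ?_⟩
    ext
    simpa using hz
  have gen_of_le_A : ∀ K : Subgroup G, K ≤ A → ∃ z : G, z ∈ K ∧ orderOf z = Nat.card K := by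
    intro K hK
    haveI : IsCyclic ↥(K.subgroupOf A) := Subgroup.isCyclic _
    have e := Subgroup.subgroupOfEquivOfLe hK
    haveI : IsCyclic ↥K := isCyclic_of_surjective e e.surjective
    obtain ⟨g, hg⟩ := IsCyclic.exists_ofOrder_eq_natCard (α := ↥K)
    exact ⟨g.1, g.2, by rw [Subgroup.orderOf_coe, hg]⟩
  have hall : ∀ x : G ⧸ A, x ∈ Subgroup.zpowers (π b) := by
    intro x; rw [htop]; trivial
  haveI hQc : IsCyclic (G ⧸ A) := ⟨⟨π b, hall⟩⟩
  have gen_of_quot : ∀ Q : Subgroup (G ⧸ A), ∃ y, y ∈ Q ∧ orderOf y = Nat.card Q := by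
    intro Q
    haveI : IsCyclic ↥Q := Subgroup.isCyclic Q
    obtain ⟨g, hg⟩ := IsCyclic.exists_ofOrder_eq_natCard (α := ↥Q)
    exact ⟨g.1, g.2, by rw [Subgroup.orderOf_coe, hg]⟩
  -- order of (π b)^j
  have hordπ : ∀ j : ℕ, orderOf ((π b) ^ j) = n / Nat.gcd n j := by
    intro j
    rw [orderOf_pow, hob]
  -- r^d ≡ 1, so a commutes with b^d
  have hrd : ((r : ZMod m)) ^ d = 1 := by rw [hd_eq]; exact pow_orderOf_eq_one _
  have hrdm : r ^ d ≡ 1 [MOD m] := by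
    have : ((r ^ d : ℕ) : ZMod m) = ((1 : ℕ) : ZMod m) := by push_cast; rw [hrd]
    exact (ZMod.natCast_eq_natCast_iff _ _ _).mp this
  have hcd : Commute a (b ^ d) := by
    have h1 : a ^ 1 * b ^ d = b ^ d * a ^ (1 * r ^ d) := hswap d 1
    have h2 : a ^ (1 * r ^ d) = a ^ 1 := by
      rw [pow_eq_pow_iff_modEq, ha, Nat.one_mul]
      exact hrdm
    rw [h2, pow_one] at h1
    exact h1
  -- the subgroup H₀ = C(a)
  set H₀ := Subgroup.centralizer ({a} : Set G) with hH₀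
  have haH₀ : a ∈ H₀ := Subgroup.mem_centralizer_iff.mpr (by rintro h rfl; rfl)
  have hbdH₀ : b ^ d ∈ H₀ := Subgroup.mem_centralizer_iff.mpr (by rintro h rfl; exact hcd)
  have hAleH₀ : A ≤ H₀ := Subgroup.zpowers_le.mpr haH₀
  have hmemH₀ : ∀ x : G, x ∈ H₀ ↔ ∃ k l : ℕ, x = a ^ k * (b ^ d) ^ l := by
    intro x
    constructor
    · intro hx
      obtain ⟨k, j, rfl⟩ := coords x
      have hcomm : a * (a ^ k * b ^ j) = (a ^ k * b ^ j) * a :=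
        Subgroup.mem_centralizer_iff.mp hx a rfl
      have h1 : ((r : ZMod (orderOf a))) ^ j = 1 := hcore a k j (Subgroup.mem_zpowers a)
        (by rw [hcomm])
      rw [ha] at h1
      have h2 : d ∣ j := by rw [hd_eq]; exact orderOf_dvd_of_pow_eq_one h1
      obtain ⟨l, rfl⟩ := h2
      exact ⟨k, l, by rw [pow_mul]⟩
    · rintro ⟨k, l, rfl⟩
      exact Subgroup.mul_mem _ (Subgroup.pow_mem _ haH₀ k) (Subgroup.pow_mem _ hbdH₀ l)
  have hcentH₀ : Subgroup.centralizer (H₀ : Set G) = H₀ := by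
    apply le_antisymm
    · intro x hx
      refine Subgroup.mem_centralizer_iff.mpr ?_
      rintro h hh
      rw [Set.mem_singleton_iff] at hh
      rw [hh]
      exact Subgroup.mem_centralizer_iff.mp hx a (hAleH₀ (Subgroup.mem_zpowers a))
    · intro x hx
      refine Subgroup.mem_centralizer_iff.mpr ?_
      intro g hg
      obtain ⟨k, l, rfl⟩ := (hmemH₀ x).mp hx
      obtain ⟨k', l', rfl⟩ := (hmemH₀ g).mp hg
      have c1 : Commute (a ^ k') ((b ^ d) ^ l') := (hcd.pow_pow k' l')
      have c2 : Commute (a ^ k') (a ^ k) := (Commute.refl a).pow_pow k' k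
      have c3 : Commute ((b ^ d) ^ l') (a ^ k) := (hcd.symm.pow_pow l' k)
      have c4 : Commute ((b ^ d) ^ l') ((b ^ d) ^ l) := (Commute.refl (b ^ d)).pow_pow l' l
      have c5 : Commute (a ^ k') ((b ^ d) ^ l) := hcd.pow_pow k' l
      exact (c2.mul_right c5).mul_left (c3.mul_right c4)
  have hH₀A : H₀ ⊓ A = A := inf_eq_right.mpr hAleH₀
  have hmapH₀ : Subgroup.map π H₀ = Subgroup.zpowers ((π b) ^ d) := by
    apply le_antisymm
    · rintro y hy
      obtain ⟨x, hx, rfl⟩ := Subgroup.mem_map.mp hy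
      obtain ⟨k, l, rfl⟩ := (hmemH₀ x).mp hx
      rw [map_mul, map_pow, map_pow, map_pow, hπa, one_pow, one_mul]
      exact Subgroup.pow_mem _ (Subgroup.mem_zpowers _) l
    · rw [Subgroup.zpowers_le]
      exact Subgroup.mem_map.mpr ⟨b ^ d, hbdH₀, by rw [map_pow]⟩
  have hgcdnd : Nat.gcd n d = d := Nat.gcd_eq_right hdvdn
  have cardH₀ : Nat.card H₀ = n / d * m := by
    rw [hsplit H₀, hmapH₀, hH₀A, cardA, Nat.card_zpowers, hordπ, hgcdnd]
  have measureH₀ : chermakDelgadoMeasure H₀ = m ^ 2 * n ^ 2 / d ^ 2 := by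
    rw [chermakDelgadoMeasure, hcentH₀, cardH₀]
    obtain ⟨n', rfl⟩ := hdvdn
    rw [Nat.mul_div_cancel_left n' hdpos]
    have h1 : m ^ 2 * (d * n') ^ 2 = d ^ 2 * (m ^ 2 * n' ^ 2) := by ring
    rw [h1, Nat.mul_div_cancel_left _ (by positivity : 0 < d ^ 2)]
    ring
  constructor
  · exact ⟨H₀, measureH₀⟩
  -- upper bound
  rintro k ⟨H, rfl⟩
  set C := Subgroup.centralizer (H : Set G) with hC
  set m₁ := Nat.card ↥(H ⊓ A) with hm₁
  set m₂ := Nat.card ↥(C ⊓ A) with hm₂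
  set n₁ := Nat.card (Subgroup.map π H) with hn₁
  set n₂ := Nat.card (Subgroup.map π C) with hn₂
  set t₁ := orderOf ((r : ZMod m₁)) with ht₁
  set t₂ := orderOf ((r : ZMod m₂)) with ht₂
  have hm₁m : m₁ ∣ m := cardA ▸ Subgroup.card_dvd_of_le (inf_le_right : H ⊓ A ≤ A)
  have hm₂m : m₂ ∣ m := cardA ▸ Subgroup.card_dvd_of_le (inf_le_right : C ⊓ A ≤ A)
  have ht₁n : t₁ ∣ n := orderOf_dvd_of_pow_eq_one (hcastpow m₁ hm₁m)
  have ht₂n : t₂ ∣ n := orderOf_dvd_of_pow_eq_one (hcastpow m₂ hm₂m)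
  -- key bound generator: from a subgroup K of A of full order element and an element x = a^i b^j
  -- commuting with it, deduce ord_{card K}(r) ∣ j.
  have key : ∀ (K : Subgroup G) (x : G), K ≤ A →
      (∀ z ∈ K, z * x = x * z) →
      ∃ j : ℕ, orderOf (π x) = n / Nat.gcd n j ∧ ((r : ZMod (Nat.card K))) ^ j = 1 := by
    intro K x hKA hcomm
    obtain ⟨z, hzK, hzord⟩ := gen_of_le_A K hKA
    obtain ⟨i, j, rfl⟩ := coords x
    refine ⟨j, ?_, ?_⟩
    · rw [map_mul, map_pow, map_pow, hπa, one_pow, one_mul, hordπ]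
    · rw [← hzord]
      exact hcore z i j (hKA hzK) (hcomm z hzK)
  -- apply to H's side: z ∈ C ⊓ A commutes with elements of H
  obtain ⟨y₁, hy₁Q, hy₁ord⟩ := gen_of_quot (Subgroup.map π H)
  obtain ⟨h₁, hh₁H, hh₁y⟩ := Subgroup.mem_map.mp hy₁Q
  have hkey1 := key (C ⊓ A) h₁ inf_le_right (by
    intro z hz
    exact (Subgroup.mem_centralizer_iff.mp hz.1 h₁ hh₁H).symm)
  obtain ⟨j₁, hj₁ord, hj₁pow⟩ := hkey1
  have hn₁gcd : n₁ * Nat.gcd n j₁ = n := by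
    rw [hn₁, ← hy₁ord, ← hh₁y, hj₁ord]
    exact Nat.div_mul_cancel (Nat.gcd_dvd_left n j₁)
  have hB1 : n₁ * t₂ ≤ n := by
    have h1 : t₂ ∣ Nat.gcd n j₁ := Nat.dvd_gcd ht₂n (orderOf_dvd_of_pow_eq_one hj₁pow)
    calc n₁ * t₂ ≤ n₁ * Nat.gcd n j₁ :=
          Nat.mul_le_mul_left _ (Nat.le_of_dvd (Nat.gcd_pos_of_pos_left _ hn) h1)
      _ = n := hn₁gcd
  -- apply to C's side
  obtain ⟨y₂, hy₂Q, hy₂ord⟩ := gen_of_quot (Subgroup.map π C)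
  obtain ⟨c₂, hc₂C, hc₂y⟩ := Subgroup.mem_map.mp hy₂Q
  have hkey2 := key (H ⊓ A) c₂ inf_le_right (by
    intro z hz
    exact (Subgroup.mem_centralizer_iff.mp hc₂C z hz.1))
  obtain ⟨j₂, hj₂ord, hj₂pow⟩ := hkey2
  have hn₂gcd : n₂ * Nat.gcd n j₂ = n := by
    rw [hn₂, ← hy₂ord, ← hc₂y, hj₂ord]
    exact Nat.div_mul_cancel (Nat.gcd_dvd_left n j₂)
  have hB2 : n₂ * t₁ ≤ n := by
    have h1 : t₁ ∣ Nat.gcd n j₂ := Nat.dvd_gcd ht₁n (orderOf_dvd_of_pow_eq_one hj₂pow)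
    calc n₂ * t₁ ≤ n₂ * Nat.gcd n j₂ :=
          Nat.mul_le_mul_left _ (Nat.le_of_dvd (Nat.gcd_pos_of_pos_left _ hn) h1)
      _ = n := hn₂gcd
  have hA1 : d * m₁ ≤ t₁ * m := by
    have := ordBound (u := m₁) r n hm₁m hm hn hrm
    rw [← hd_eq] at this
    exact this
  have hA2 : d * m₂ ≤ t₂ * m := by
    have := ordBound (u := m₂) r n hm₂m hm hn hrm
    rw [← hd_eq] at this
    exact this
  have hmeas : chermakDelgadoMeasure H = n₁ * m₁ * (n₂ * m₂) := by
    rw [chermakDelgadoMeasure, hsplit H, hsplit (Subgroup.centralizer (H : Set G))]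
  rw [hmeas]
  rw [Nat.le_div_iff_mul_le (by positivity : 0 < d ^ 2)]
  have E1 : d * m₁ * (d * m₂) ≤ t₁ * m * (t₂ * m) := Nat.mul_le_mul hA1 hA2
  have E2 : n₁ * t₂ * (n₂ * t₁) ≤ n * n := Nat.mul_le_mul hB1 hB2
  calc n₁ * m₁ * (n₂ * m₂) * d ^ 2 = d * m₁ * (d * m₂) * (n₁ * n₂) := by ring
    _ ≤ t₁ * m * (t₂ * m) * (n₁ * n₂) := Nat.mul_le_mul_right _ E1
    _ = m * m * (n₁ * t₂ * (n₂ * t₁)) := by ring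
    _ ≤ m * m * (n * n) := Nat.mul_le_mul_left _ E2
    _ = m ^ 2 * n ^ 2 := by ring
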